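/- Let (R, m) be a Noetherian local ring, x ∈ m a non-zerodivisor on R, and E a finitely generated R-module on which x is a non-zerodivisor with x·Ext^1_R(E, Z) = 0, where 0 → Z → F → E → 0 is exact with F free. Then there is a short exact sequence 0 → Z → Z ⊕ E → E → 0 in which the map E → E (as the composite through the pullback) is multiplication by x; consequently E/xE has first syzygy (over R) equal to Z ⊕ E up to free summands, and Ext_R^i(Z ⊕ E, N) ≅ Ext_R^{i+1}(E/xE, N) for all i > 0 and all R-modules N. -/

import Mathlib

open CategoryTheory IsLocalRing


open CategoryTheory Limits HomologicalComplex

set_option linter.unusedSectionVars false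
noncomputable section

variable {R : Type} [CommRing R] {A P B : ModuleCat.{0} R}

def aug (PA : ProjectiveResolution A) : PA.complex.X 0 ⟶ A :=
  PA.π.f 0 ≫ (HomologicalComplex.singleObjXSelf (ComplexShape.down ℕ) 0 A).hom

lemma aug_surjective (PA : ProjectiveResolution A) : Function.Surjective (aug PA) := by
  have : Epi (aug PA) := by unfold aug; infer_instance
  exact (ModuleCat.epi_iff_surjective _).1 this

lemma d_aug (PA : ProjectiveResolution A) : PA.complex.d 1 0 ≫ aug PA = 0 := by
  rw [aug, ← Category.assoc, PA.complex_d_comp_π_f_zero, zero_comp]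

lemma exact_aug (PA : ProjectiveResolution A) :
    LinearMap.range (PA.complex.d 1 0).hom = LinearMap.ker (aug PA).hom := by
  have h := PA.exact₀.moduleCat_range_eq_ker
  dsimp [aug]
  exact h

section Splice

variable (f : A ⟶ P) (g : P ⟶ B) (PA : ProjectiveResolution A)

/-- objects of the spliced resolution -/
def spliceX (PA : ProjectiveResolution A) : ℕ → ModuleCat.{0} R
  | 0 => P
  | (n+1) => PA.complex.X n

/-- differentials of the spliced resolution -/
def spliceD : ∀ n : ℕ, spliceX (P := P) PA (n+1) ⟶ spliceX (P := P) PA n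
  | 0 => aug PA ≫ f
  | (n+1) => PA.complex.d (n+1) n

lemma spliceD_sq (n : ℕ) : spliceD f PA (n+1) ≫ spliceD f PA n = 0 := by
  match n with
  | 0 => show PA.complex.d 1 0 ≫ aug PA ≫ f = 0
         rw [← Category.assoc, d_aug, zero_comp]
  | (n+1) => exact PA.complex.d_comp_d _ _ _

/-- the spliced chain complex -/
def spliceC : ChainComplex (ModuleCat.{0} R) ℕ :=
  ChainComplex.of (spliceX (P := P) PA) (spliceD f PA) (spliceD_sq f PA)

lemma spliceC_d_one_zero : (spliceC f PA).d 1 0 = aug PA ≫ f :=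
  ChainComplex.of_d (spliceX (P := P) PA) (spliceD f PA) 0

lemma spliceC_d_succ (n : ℕ) :
    (spliceC f PA).d (n+2) (n+1) = PA.complex.d (n+1) n :=
  ChainComplex.of_d _ _ _

end Splice

section Splice2

variable (f : A ⟶ P) (g : P ⟶ B) (PA : ProjectiveResolution A) [Projective P]

lemma splice_exactAt_succ (hf : Function.Injective f) (n : ℕ) :
    (spliceC f PA).ExactAt (n+1) := by
  rw [HomologicalComplex.exactAt_iff' _ (n+2) (n+1) n (by simp) (by simp)]
  rw [ShortComplex.moduleCat_exact_iff]
  dsimp [HomologicalComplex.sc', HomologicalComplex.shortComplexFunctor']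
  match n with
  | 0 =>
    rw [spliceC_d_one_zero, spliceC_d_succ]
    intro p hp
    have hap : aug PA p = 0 := by
      apply hf
      rw [map_zero]
      exact hp
    have : p ∈ LinearMap.ker (aug PA).hom := hap
    rw [← exact_aug] at this
    obtain ⟨q, hq⟩ := this
    exact ⟨q, hq⟩
  | (n+1) =>
    rw [spliceC_d_succ, spliceC_d_succ]
    have h := PA.complex_exactAt_succ n
    rw [HomologicalComplex.exactAt_iff' _ (n+2) (n+1) n (by simp) (by simp),
      ShortComplex.moduleCat_exact_iff] at h
    exact h


lemma splice_fg0 (hfg : LinearMap.range f.hom = LinearMap.ker g.hom) : f ≫ g = 0 := by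
  ext a
  have : f a ∈ LinearMap.ker g.hom := by rw [← hfg]; exact ⟨a, rfl⟩
  simpa using this

/-- The spliced projective resolution of `B`. -/
def spliceRes (hf : Function.Injective f) (hg : Function.Surjective g)
    (hfg : LinearMap.range f.hom = LinearMap.ker g.hom) : ProjectiveResolution B where
  complex := spliceC f PA
  projective := fun n => match n with
    | 0 => (inferInstance : Projective P)
    | (n+1) => PA.projective n
  π := (ChainComplex.toSingle₀Equiv _ _).symm ⟨g, by
    rw [spliceC_d_one_zero]; exact (Category.assoc _ _ _).trans ((congrArg (aug PA ≫ ·) (splice_fg0 f g hfg)).trans Limits.comp_zero)⟩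
  quasiIso := ⟨fun n => by
    cases n with
    | zero =>
      rw [ChainComplex.quasiIsoAt₀_iff, ShortComplex.quasiIso_iff_of_zeros']
      rotate_left
      · rfl
      · rfl
      · rfl
      have w : (spliceC f PA).d 1 0 ≫ g = 0 := by
        rw [spliceC_d_one_zero]; exact (Category.assoc _ _ _).trans ((congrArg (aug PA ≫ ·) (splice_fg0 f g hfg)).trans Limits.comp_zero)
      have hex : (ShortComplex.mk ((spliceC f PA).d 1 0) g w).Exact := by
        rw [ShortComplex.moduleCat_exact_iff]
        intro p hp
        dsimp at hp ⊢
        have : p ∈ LinearMap.ker g.hom := hp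
        rw [← hfg] at this
        obtain ⟨a, ha⟩ := this
        obtain ⟨q, hq⟩ := aug_surjective PA a
        refine ⟨q, ?_⟩
        exact (congrArg (fun φ => φ q) (spliceC_d_one_zero f PA)).trans (by show f (aug PA q) = p; rw [hq, ha])
      have hepi : Epi (ShortComplex.mk ((spliceC f PA).d 1 0) g w).g :=
        (ModuleCat.epi_iff_surjective g).2 hg
      refine (ShortComplex.exact_and_epi_g_iff_of_iso ?_).2 ⟨hex, hepi⟩
      refine ShortComplex.isoMk (Iso.refl _) (Iso.refl _) (Iso.refl _) ?_ ?_
      · exact (Category.id_comp _).trans (Category.comp_id _).symm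
      · exact (Category.id_comp _).trans ((ChainComplex.toSingle₀Equiv_symm_apply_f_zero (C := spliceC f PA) (X := B) g _).symm.trans (Category.comp_id _).symm)
    | succ n =>
      rw [quasiIsoAt_iff_exactAt']
      · exact splice_exactAt_succ f PA hf n
      · apply ChainComplex.exactAt_succ_single_obj⟩

end Splice2

section Shift
variable (f : A ⟶ P) (PA : ProjectiveResolution A)

/-- The comparison of hom-complex short complexes under splicing. -/
def shiftSCIso (N : ModuleCat.{0} R) (n : ℕ) :
    (((spliceC f PA).linearYonedaObj R N).sc' (n+1) (n+2) (n+3)) ≅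
    ((PA.complex.linearYonedaObj R N).sc' n (n+1) (n+2)) := by
  refine ShortComplex.isoMk (Iso.refl _) (Iso.refl _) (Iso.refl _) ?_ ?_
  · dsimp only [HomologicalComplex.sc', HomologicalComplex.shortComplexFunctor']
    simp only [ChainComplex.linearYonedaObj_d, Category.id_comp, Category.comp_id]
    rw [spliceC_d_succ]
    exact (Category.id_comp _).trans (Category.comp_id _).symm
  · dsimp only [HomologicalComplex.sc', HomologicalComplex.shortComplexFunctor']
    simp only [ChainComplex.linearYonedaObj_d, Category.id_comp, Category.comp_id]
    rw [spliceC_d_succ]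
    exact (Category.id_comp _).trans (Category.comp_id _).symm

def shiftHomologyIso (N : ModuleCat.{0} R) (n : ℕ) :
    ((spliceC f PA).linearYonedaObj R N).homology (n+2) ≅
    ((PA.complex.linearYonedaObj R N).homology (n+1)) :=
  (HomologicalComplex.homologyIsoSc' _ (n+1) (n+2) (n+3) (by simp) (by simp)) ≪≫
  ShortComplex.homologyMapIso (shiftSCIso f PA N n) ≪≫
  (HomologicalComplex.homologyIsoSc' _ n (n+1) (n+2) (by simp) (by simp)).symm

end Shift

section ExtIso
variable (f : A ⟶ P) (g : P ⟶ B) (PA : ProjectiveResolution A) [Projective P]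
variable (hf : Function.Injective f) (hg : Function.Surjective g)
  (hfg : LinearMap.range f.hom = LinearMap.ker g.hom)

def extShiftIso (N : ModuleCat.{0} R) (n : ℕ) :
    ((Ext R (ModuleCat R) (n+2)).obj (Opposite.op B)).obj N ≅
    ((Ext R (ModuleCat R) (n+1)).obj (Opposite.op A)).obj N :=
  ((spliceRes f g PA hf hg hfg).isoExt (n+2) N) ≪≫ shiftHomologyIso f PA N n ≪≫
    (PA.isoExt (n+1) N).symm

def ext1Iso (N : ModuleCat.{0} R) :
    ((Ext R (ModuleCat R) 1).obj (Opposite.op B)).obj N ≅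
    (((spliceC f PA).linearYonedaObj R N).sc' 0 1 2).moduleCatLeftHomologyData.H :=
  ((spliceRes f g PA hf hg hfg).isoExt 1 N) ≪≫
    HomologicalComplex.homologyIsoSc' _ 0 1 2 (by simp) (by simp) ≪≫
    ShortComplex.moduleCatHomologyIso _

include g PA hf hg hfg in
lemma exists_lift (x : R)
    (hx : ∀ e : ((Ext R (ModuleCat R) 1).obj (Opposite.op B)).obj A, x • e = 0) :
    ∃ v : P ⟶ A, ∀ a : A, v (f a) = x • a := by
  set S := (((spliceC f PA).linearYonedaObj R A).sc' 0 1 2) with hS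
  have hkill : ∀ h : S.moduleCatLeftHomologyData.H, x • h = 0 := by
    intro h
    have Φ := (ext1Iso f g PA hf hg hfg A).toLinearEquiv
    have : h = Φ (Φ.symm h) := (Φ.apply_symm_apply h).symm
    rw [this, ← map_smul, hx, map_zero]
  -- the cocycle
  have hc : S.g (aug PA) = 0 := by
    show (Linear.leftComp R A ((spliceC f PA).d 2 1)) (aug PA) = 0
    have : (spliceC f PA).d 2 1 = PA.complex.d 1 0 := spliceC_d_succ f PA 0
    simp [Linear.leftComp, this, d_aug]
    exact d_aug PA
  have hmem : (x • (⟨aug PA, hc⟩ : LinearMap.ker S.g.hom)) ∈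
      LinearMap.range S.moduleCatToCycles := by
    have h0 := hkill (Submodule.Quotient.mk (⟨aug PA, hc⟩ : LinearMap.ker S.g.hom))
    replace h0 := (Submodule.Quotient.mk_eq_zero _ (x := x • (⟨aug PA, hc⟩ : LinearMap.ker S.g.hom))).1 h0
    exact h0
  obtain ⟨v, hv⟩ : ∃ v : (P ⟶ A), S.moduleCatToCycles v = x • (⟨aug PA, hc⟩ : LinearMap.ker S.g.hom) := hmem
  refine ⟨v, ?_⟩
  have hv' : S.f v = x • (aug PA : PA.complex.X 0 ⟶ A) := congrArg Subtype.val hv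
  have hv'' : ((spliceC f PA).d 1 0 ≫ v : (spliceC f PA).X 1 ⟶ A)
      = x • (aug PA : PA.complex.X 0 ⟶ A) := hv'
  rw [spliceC_d_one_zero] at hv''
  intro a
  obtain ⟨p, hp⟩ := aug_surjective PA a
  have h2 := ConcreteCategory.congr_hom hv'' p
  have h3 : v (f (aug PA p)) = x • (aug PA p) := by
    exact h2
  rw [hp] at h3
  exact h3

end ExtIso


section Final

open CategoryTheory Limits HomologicalComplex Pointwise

/-- Let `(R, m)` be a Noetherian local ring, `x ∈ m` a non-zerodivisor on
`R` and on a finitely generated module `E` with free presentation `0 → Z → F → E → 0`, such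
that `x · Ext¹_R(E, Z) = 0`.  Then there is a short exact sequence `0 → Z → Z ⊕ E → E → 0`
fitting over the presentation with the induced self-map of `E` being multiplication by `x`,
and `Ext_R^i(Z ⊕ E, N) ≅ Ext_R^{i+1}(E/xE, N)` for all `i > 0` and all `N`. -/
theorem stmt18 (R : Type) [CommRing R] [IsNoetherianRing R] [IsLocalRing R]
    (x : R) (hxm : x ∈ maximalIdeal R) (hx : x ∈ nonZeroDivisors R)
    (Z F E : Type) [AddCommGroup Z] [Module R Z] [AddCommGroup F] [Module R F]
    [AddCommGroup E] [Module R E]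
    [Module.Free R F] [Module.Finite R F] [Module.Finite R E] [Module.Finite R Z]
    (hxE : ∀ e : E, x • e = 0 → e = 0)
    (ι : Z →ₗ[R] F) (π : F →ₗ[R] E)
    (hι : Function.Injective ι) (hπ : Function.Surjective π)
    (hexact : Function.Exact ι π)
    (hExt : ∀ e : ((Ext R (ModuleCat R) 1).obj
        (Opposite.op (ModuleCat.of R E))).obj (ModuleCat.of R Z), x • e = 0) :
    (∃ (j : Z →ₗ[R] Z × E) (q : (Z × E) →ₗ[R] E),
      Function.Injective j ∧ Function.Surjective q ∧ Function.Exact j q ∧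
      ∃ t : (Z × E) →ₗ[R] F, t.comp j = ι ∧ π.comp t = x • q) ∧
    (∀ i : ℕ, 0 < i → ∀ N : ModuleCat R,
      Nonempty
        ((((Ext R (ModuleCat R) i).obj
            (Opposite.op (ModuleCat.of R (Z × E)))).obj N)
          ≃ₗ[R]
         (((Ext R (ModuleCat R) (i + 1)).obj
            (Opposite.op (ModuleCat.of R
              (E ⧸ ((Ideal.span {x} : Ideal R) • (⊤ : Submodule R E)))))).obj N))) := by
  classical
  let ZM := ModuleCat.of R Z
  let FM := ModuleCat.of R F
  let EM := ModuleCat.of R E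
  have instFproj : Projective FM := ModuleCat.projective_of_free (Module.Free.chooseBasis R F)
  let ιm : ZM ⟶ FM := ModuleCat.ofHom ι
  let πm : FM ⟶ EM := ModuleCat.ofHom π
  have hkr : LinearMap.ker π = LinearMap.range ι := LinearMap.exact_iff.mp hexact
  have hrange : LinearMap.range ιm.hom = LinearMap.ker πm.hom := hkr.symm
  let PZ : ProjectiveResolution ZM := ProjectiveResolution.of ZM
  obtain ⟨v, hv⟩ := exists_lift ιm πm PZ hι hπ hrange x hExt
  have hπι : ∀ z : Z, π (ι z) = 0 := fun z => hexact.apply_apply_eq_zero z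
  -- the lift `σ : E →ₗ F` of multiplication by `x`
  let w : F →ₗ[R] F := x • LinearMap.id - ι ∘ₗ v.hom
  have hw : LinearMap.ker π ≤ LinearMap.ker w := by
    intro k hk
    rw [hkr] at hk
    obtain ⟨z, rfl⟩ := hk
    have h2 : v.hom (ι z) = x • z := hv z
    have h1 : w (ι z) = x • (ι z) - ι (v.hom (ι z)) := rfl
    show w (ι z) = 0
    rw [h1, h2, map_smul, sub_self]
  let e2 : (F ⧸ LinearMap.ker π) ≃ₗ[R] E := π.quotKerEquivOfSurjective hπ
  have he2 : ∀ fe : F, e2 (Submodule.Quotient.mk fe) = π fe := fun fe => rfl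
  let σ : E →ₗ[R] F := ((LinearMap.ker π).liftQ w hw) ∘ₗ
    (e2.symm : E →ₗ[R] (F ⧸ LinearMap.ker π))
  have hσ : ∀ e : E, π (σ e) = x • e := by
    intro e
    obtain ⟨fe, rfl⟩ := hπ e
    have hmk : e2.symm (π fe) = Submodule.Quotient.mk fe := by
      apply e2.injective; rw [LinearEquiv.apply_symm_apply, he2]
    show π (((LinearMap.ker π).liftQ w hw) (e2.symm (π fe))) = x • π fe
    rw [hmk, Submodule.liftQ_apply]
    have h1 : w fe = x • fe - ι (v.hom fe) := rfl
    rw [h1, map_sub, map_smul, hπι, sub_zero]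
  constructor
  · -- part 1
    refine ⟨LinearMap.inl R Z E, LinearMap.snd R Z E, LinearMap.inl_injective, ?_,
      Function.Exact.inl_snd, ι.coprod σ, LinearMap.coprod_inl ι σ, ?_⟩
    · exact fun e => ⟨(0, e), rfl⟩
    · apply LinearMap.ext
      rintro ⟨z, e⟩
      simp [hπι, hσ]
  · -- part 2
    intro i hi N
    obtain ⟨n, rfl⟩ : ∃ n, i = n + 1 := ⟨i - 1, (Nat.succ_pred_eq_of_pos hi).symm⟩
    set xE : Submodule R E := (Ideal.span {x} : Ideal R) • ⊤ with hxEdef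
    let T : (Z × E) →ₗ[R] F := ι.coprod σ
    let gb : F →ₗ[R] (E ⧸ xE) := xE.mkQ ∘ₗ π
    let AM := ModuleCat.of R (Z × E)
    let BM := ModuleCat.of R (E ⧸ xE)
    let Tm : AM ⟶ FM := ModuleCat.ofHom T
    let gm : FM ⟶ BM := ModuleCat.ofHom gb
    have hTinj : Function.Injective Tm := by
      intro p p' hpp
      have hTT : T p = T p' := hpp
      have h1 : π (T p) = π (T p') := by rw [hTT]
      have h2 : ∀ q : Z × E, π (T q) = x • q.2 := by
        rintro ⟨z, e⟩; simp [T, hπι, hσ]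
      rw [h2 p, h2 p'] at h1
      have he : p.2 = p'.2 := by
        have := sub_eq_zero.mpr h1
        rw [← smul_sub] at this
        have := hxE _ this
        exact sub_eq_zero.mp this
      have hz : ι p.1 = ι p'.1 := by
        have : ι p.1 + σ p.2 = ι p'.1 + σ p'.2 := hTT
        rw [he] at this
        exact add_right_cancel this
      exact Prod.ext (hι hz) he
    have hgb : Function.Surjective gm :=
      (Submodule.mkQ_surjective xE).comp hπ
    have hrange2 : LinearMap.range Tm.hom = LinearMap.ker gm.hom := by
      apply le_antisymm
      · rintro _ ⟨⟨z, e⟩, rfl⟩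
        show gb (T (z, e)) = 0
        have : π (T (z, e)) = x • e := by simp [T, hπι, hσ]
        show Submodule.Quotient.mk (π (T (z, e))) = 0
        rw [this, Submodule.Quotient.mk_eq_zero]
        exact Submodule.smul_mem_smul (Ideal.mem_span_singleton_self x) trivial
      · intro fe0 hfe
        let fe : F := fe0
        have h0 : Submodule.Quotient.mk (π fe) = (0 : E ⧸ xE) := hfe
        rw [Submodule.Quotient.mk_eq_zero] at h0
        rw [hxEdef, Submodule.ideal_span_singleton_smul] at h0
        rw [← SetLike.mem_coe, Submodule.coe_pointwise_smul, Set.mem_smul_set] at h0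
        obtain ⟨e, -, he⟩ := h0
        have hker : fe - σ e ∈ LinearMap.ker π := by
          rw [LinearMap.mem_ker, map_sub, hσ, he, sub_self]
        rw [hkr] at hker
        obtain ⟨z, hz⟩ := hker
        refine ⟨(z, e), ?_⟩
        show ι z + σ e = fe
        rw [hz]
        exact sub_add_cancel _ _
    let PA2 : ProjectiveResolution AM := ProjectiveResolution.of AM
    exact ⟨(extShiftIso Tm gm PA2 hTinj hgb hrange2 N n).symm.toLinearEquiv⟩


end Final
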